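/- Let A ⊆ {1,…,p} with T ⊆ A and let i ∉ A with |A ∪ {i}| ≤ 4s*. Assume event E_n holds and that βD ≥ 2L. Then log(π(A ∪ {i}) / π(A)) ≤ −(D/2) log p; equivalently π(A ∪ {i}) ≤ p^{−D/2} π(A). -/

import Mathlib

open scoped BigOperators
open Finset

noncomputable section

/-- Span of the columns `X j`, `j ∈ S`. -/
def colSpan {n p : ℕ} (X : Fin p → EuclideanSpace ℝ (Fin n)) (S : Finset (Fin p)) :
    Submodule ℝ (EuclideanSpace ℝ (Fin n)) :=
  Submodule.span ℝ (X '' ↑S)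

/-- `Φ_S`, the orthogonal projection of ℝ^n onto the span of the columns in `S`. -/
noncomputable def proj {n p : ℕ} (X : Fin p → EuclideanSpace ℝ (Fin n)) (S : Finset (Fin p)) :
    EuclideanSpace ℝ (Fin n) →ₗ[ℝ] EuclideanSpace ℝ (Fin n) :=
  (colSpan X S).subtype ∘ₗ (Submodule.orthogonalProjection (colSpan X S)).toLinearMap

/-- Restricted eigenvalue condition: `‖X_S w‖² ≥ n ν ‖w‖²` for all `S` with `|S| ≤ m`. -/
def RECond {n p : ℕ} (X : Fin p → EuclideanSpace ℝ (Fin n)) (ν : ℝ) (m : ℕ) : Prop :=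
  ∀ S : Finset (Fin p), S.card ≤ m → ∀ w : Fin p → ℝ,
    (n : ℝ) * ν * ∑ j ∈ S, w j ^ 2 ≤ ‖∑ j ∈ S, w j • X j‖ ^ 2

/-- The unnormalized weight exp(G(S,Y) − m(S)), where G(S,Y) = ‖Φ_S Y‖²/β and
m(S) = D|S| log p + (2/β) trace(Φ_S) + (4n/β) 1{|S| > 4s}. -/
noncomputable def postWt {n p : ℕ} (X : Fin p → EuclideanSpace ℝ (Fin n))
    (Y : EuclideanSpace ℝ (Fin n)) (β D : ℝ) (s : ℕ) (S : Finset (Fin p)) : ℝ :=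
  Real.exp (‖proj X S Y‖ ^ 2 / β -
    (D * S.card * Real.log p +
      2 * LinearMap.trace ℝ (EuclideanSpace ℝ (Fin n)) (proj X S) / β +
      if 4 * s < S.card then 4 * n / β else 0))

/-- The probability distribution π(S) ∝ exp(G(S,Y) − m(S)) on subsets of {1,…,p}. -/
noncomputable def postPi {n p : ℕ} (X : Fin p → EuclideanSpace ℝ (Fin n))
    (Y : EuclideanSpace ℝ (Fin n)) (β D : ℝ) (s : ℕ) (S : Finset (Fin p)) : ℝ :=
  postWt X Y β D s S / ∑ S' : Finset (Fin p), postWt X Y β D s S'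

/-! ### Auxiliary lemmas -/

lemma proj_apply {n p : ℕ} (X : Fin p → EuclideanSpace ℝ (Fin n)) (S : Finset (Fin p))
    (y : EuclideanSpace ℝ (Fin n)) :
    proj X S y = (Submodule.orthogonalProjection (colSpan X S) y : EuclideanSpace ℝ (Fin n)) := rfl

lemma mem_colSpan_iff {n p : ℕ} (X : Fin p → EuclideanSpace ℝ (Fin n)) (S : Finset (Fin p))
    (y : EuclideanSpace ℝ (Fin n)) :
    y ∈ colSpan X S ↔ ∃ w : Fin p → ℝ, y = ∑ j ∈ S, w j • X j := by
  constructor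
  · intro hy
    rw [colSpan, Finsupp.mem_span_image_iff_linearCombination] at hy
    obtain ⟨l, hl, rfl⟩ := hy
    refine ⟨l, ?_⟩
    rw [Finsupp.linearCombination_apply, Finsupp.sum]
    have hsub : l.support ⊆ S := by
      have := (Finsupp.mem_supported ℝ l).mp hl
      exact_mod_cast this
    exact Finset.sum_subset hsub fun j _ hj => by
      simp [Finsupp.notMem_support_iff.mp hj]
  · rintro ⟨w, rfl⟩
    exact Submodule.sum_mem _ fun j hj =>
      Submodule.smul_mem _ _ (Submodule.subset_span ⟨j, hj, rfl⟩)

lemma isProj_proj {n p : ℕ} (X : Fin p → EuclideanSpace ℝ (Fin n)) (S : Finset (Fin p)) :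
    LinearMap.IsProj (colSpan X S) (proj X S) :=
  ⟨fun _ => Submodule.coe_mem _, fun _ hx => Submodule.starProjection_eq_self_iff.mpr hx⟩

lemma trace_proj {n p : ℕ} (X : Fin p → EuclideanSpace ℝ (Fin n)) (S : Finset (Fin p)) :
    LinearMap.trace ℝ (EuclideanSpace ℝ (Fin n)) (proj X S) =
      (Module.finrank ℝ (colSpan X S) : ℝ) :=
  (isProj_proj X S).trace

lemma colSpan_mono {n p : ℕ} (X : Fin p → EuclideanSpace ℝ (Fin n)) {S S' : Finset (Fin p)}
    (h : S ⊆ S') : colSpan X S ≤ colSpan X S' :=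
  Submodule.span_mono (Set.image_mono (f := X) (Finset.coe_subset.mpr h))

/-- if T ⊆ A, i ∉ A, |A ∪ {i}| ≤ 4s*, event E_n holds and βD ≥ 2L, then
log(π(A ∪ {i})/π(A)) ≤ −(D/2) log p. -/
theorem stmt6 {n p s : ℕ} (hn : 0 < n) (hp : 2 ≤ p) (hs : 0 < s) (hsp : 6 * s ≤ p)
    (X : Fin p → EuclideanSpace ℝ (Fin n))
    (hX : ∀ j, ‖X j‖ = Real.sqrt n)
    {ν : ℝ} (hν : 0 < ν) (hRE : RECond X ν (6 * s))
    (θ : Fin p → ℝ) (T : Finset (Fin p)) (hT : T = Finset.univ.filter fun j => θ j ≠ 0)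
    (hTcard : T.card = s)
    (ε Y : EuclideanSpace ℝ (Fin n)) (hY : Y = (∑ j, θ j • X j) + ε)
    (β D L : ℝ) (hβ : 0 < β) (hD : 0 < D) (hL : 0 < L)
    (hE : ∀ S : Finset (Fin p), S.card < 6 * s → ∀ j ∉ S,
      (inner ℝ (X j - proj X S (X j)) ε : ℝ) ^ 2 ≤ (n : ℝ) * L * ν * Real.log p)
    (hβD : 2 * L ≤ β * D)
    (A : Finset (Fin p)) (hTA : T ⊆ A) (i : Fin p) (hi : i ∉ A)
    (hcard : (insert i A).card ≤ 4 * s) :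
    Real.log (postPi X Y β D s (insert i A) / postPi X Y β D s A) ≤
      -(D / 2) * Real.log p := by
  classical
  set A' : Finset (Fin p) := insert i A with hA'
  have hcardA' : A'.card = A.card + 1 := Finset.card_insert_of_notMem hi
  have hlogp : (0:ℝ) ≤ Real.log p :=
    Real.log_nonneg (by exact_mod_cast le_trans one_le_two hp)
  -- the normalizing constant cancels
  have hZ : 0 < ∑ S' : Finset (Fin p), postWt X Y β D s S' :=
    Finset.sum_pos (fun _ _ => Real.exp_pos _) ⟨∅, Finset.mem_univ _⟩
  have hratio : postPi X Y β D s A' / postPi X Y β D s A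
      = postWt X Y β D s A' / postWt X Y β D s A := by
    rw [postPi, postPi, div_div_div_comm, div_self hZ.ne', div_one]
  -- indicator terms vanish
  have hind' : ¬ (4 * s < A'.card) := not_lt.mpr hcard
  have hind : ¬ (4 * s < A.card) := not_lt.mpr (by omega)
  -- key vector v
  set v : EuclideanSpace ℝ (Fin n) := X i - proj X A (X i) with hv
  have hv_orth : v ∈ (colSpan X A)ᗮ :=
    Submodule.sub_starProjection_mem_orthogonal (K := colSpan X A) (X i)
  -- Xθ belongs to the span of the columns in A
  have hXθ : (∑ j, θ j • X j) ∈ colSpan X A := by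
    have hsum : (∑ j, θ j • X j) = ∑ j ∈ A, θ j • X j := by
      refine (Finset.sum_subset (Finset.subset_univ A) ?_).symm
      intro j _ hj
      have hθj : θ j = 0 := by
        by_contra h
        exact hj (hTA (by simp [hT, h]))
      simp [hθj]
    rw [hsum]
    exact Submodule.sum_mem _ fun j hj =>
      Submodule.smul_mem _ _ (Submodule.subset_span ⟨j, hj, rfl⟩)
  have hvY : (inner ℝ v Y : ℝ) = inner ℝ v ε := by
    rw [hY, inner_add_right]
    have h0 : (inner ℝ v (∑ j, θ j • X j) : ℝ) = 0 := by
      rw [real_inner_comm]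
      exact (Submodule.mem_orthogonal _ _).mp hv_orth _ hXθ
    rw [h0, zero_add]
  -- lower bound on ‖v‖²
  obtain ⟨c, hc⟩ := (mem_colSpan_iff X A _).mp ((isProj_proj X A).map_mem (X i))
  have hvn : (n:ℝ) * ν ≤ ‖v‖ ^ 2 := by
    set w : Fin p → ℝ := fun j => if j = i then 1 else -c j with hw
    have hvsum : v = ∑ j ∈ A', w j • X j := by
      rw [hA', Finset.sum_insert hi]
      have hsA : ∑ j ∈ A, w j • X j = -∑ j ∈ A, c j • X j := by
        rw [← Finset.sum_neg_distrib]
        refine Finset.sum_congr rfl fun j hj => ?_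
        have hji : j ≠ i := fun h => hi (h ▸ hj)
        simp [hw, hji, neg_smul]
      rw [hsA]
      simp [hw, hv, hc, sub_eq_add_neg]
    have hw2 : (1:ℝ) ≤ ∑ j ∈ A', w j ^ 2 := by
      rw [hA', Finset.sum_insert hi]
      have h1 : w i ^ 2 = 1 := by simp [hw]
      have h2 : (0:ℝ) ≤ ∑ j ∈ A, w j ^ 2 :=
        Finset.sum_nonneg fun j _ => sq_nonneg _
      linarith
    calc (n:ℝ) * ν = (n:ℝ) * ν * 1 := by ring
      _ ≤ (n:ℝ) * ν * ∑ j ∈ A', w j ^ 2 := by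
          exact mul_le_mul_of_nonneg_left hw2 (by positivity)
      _ ≤ ‖∑ j ∈ A', w j • X j‖ ^ 2 := hRE A' (by omega) w
      _ = ‖v‖ ^ 2 := by rw [← hvsum]
  have hv2pos : (0:ℝ) < ‖v‖ ^ 2 := lt_of_lt_of_le (by positivity) hvn
  -- event E_n
  have hEi : (inner ℝ v ε : ℝ) ^ 2 ≤ (n:ℝ) * L * ν * Real.log p :=
    hE A (by omega) i hi
  -- projection geometry
  have hle : colSpan X A ≤ colSpan X A' := colSpan_mono X (Finset.subset_insert i A)
  set u : EuclideanSpace ℝ (Fin n) := proj X A' Y - proj X A Y with hu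
  have hPP : proj X A (proj X A' Y) = proj X A Y := by
    have h := Submodule.orthogonalProjectionOnto_starProjection_of_le hle Y
    calc proj X A (proj X A' Y)
        = (Submodule.orthogonalProjection (colSpan X A)
            ((Submodule.orthogonalProjection (colSpan X A') Y : EuclideanSpace ℝ (Fin n)))
          : EuclideanSpace ℝ (Fin n)) := rfl
      _ = proj X A Y := congrArg (fun x : colSpan X A => (x : EuclideanSpace ℝ (Fin n))) h
  have hu_orth : u ∈ (colSpan X A)ᗮ := by
    have h : proj X A' Y - proj X A (proj X A' Y) ∈ (colSpan X A)ᗮ :=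
      Submodule.sub_starProjection_mem_orthogonal (K := colSpan X A) (proj X A' Y)
    rwa [hPP] at h
  have hdecomp : proj X A' Y = proj X A Y + u := by rw [hu]; abel
  have hpyth : ‖proj X A' Y‖ ^ 2 = ‖proj X A Y‖ ^ 2 + ‖u‖ ^ 2 := by
    rw [hdecomp, norm_add_sq_real,
      (Submodule.mem_orthogonal _ _).mp hu_orth _ ((isProj_proj X A).map_mem Y)]
    ring
  have huK' : u ∈ colSpan X A' :=
    sub_mem ((isProj_proj X A').map_mem Y) (hle ((isProj_proj X A).map_mem Y))
  obtain ⟨d, hd⟩ := (mem_colSpan_iff X A' u).mp huK'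
  have hPu : proj X A u = 0 := by
    rw [proj_apply, Submodule.orthogonalProjectionOnto_apply_of_mem_orthogonal hu_orth]
    rfl
  have hucv : u = d i • v := by
    have ha : (∑ j ∈ A, d j • X j) ∈ colSpan X A :=
      Submodule.sum_mem _ fun j hj =>
        Submodule.smul_mem _ _ (Submodule.subset_span ⟨j, hj, rfl⟩)
    have h1 : u = d i • X i + ∑ j ∈ A, d j • X j := by rw [hd, hA', Finset.sum_insert hi]
    have h2 : (0 : EuclideanSpace ℝ (Fin n))
        = d i • proj X A (X i) + ∑ j ∈ A, d j • X j := by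
      calc (0 : EuclideanSpace ℝ (Fin n)) = proj X A u := hPu.symm
        _ = d i • proj X A (X i) + proj X A (∑ j ∈ A, d j • X j) := by
            rw [h1, map_add, map_smul]
        _ = d i • proj X A (X i) + ∑ j ∈ A, d j • X j := by
            rw [(isProj_proj X A).map_id _ ha]
    have h3 : u - 0 = d i • X i - d i • proj X A (X i) := by
      rw [h1, h2]; abel
    rw [sub_zero] at h3
    rw [h3, ← smul_sub, hv]
  have huY : (inner ℝ u Y : ℝ) = ‖u‖ ^ 2 := by
    have h1 : (inner ℝ u (Y - proj X A' Y) : ℝ) = 0 :=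
      (Submodule.mem_orthogonal _ _).mp
        (Submodule.sub_starProjection_mem_orthogonal (K := colSpan X A') Y) u huK'
    have h2 : (inner ℝ u (proj X A Y) : ℝ) = 0 := by
      rw [real_inner_comm]
      exact (Submodule.mem_orthogonal _ _).mp hu_orth _ ((isProj_proj X A).map_mem Y)
    have h3 : (inner ℝ u Y : ℝ) = inner ℝ u (proj X A' Y) := by
      have := h1
      rw [inner_sub_right, sub_eq_zero] at this
      exact this
    rw [h3, hdecomp, inner_add_right, h2, zero_add, real_inner_self_eq_norm_sq]
  -- bound on ‖u‖²
  have hu2 : ‖u‖ ^ 2 ≤ (inner ℝ v ε : ℝ) ^ 2 / ‖v‖ ^ 2 := by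
    have h1 : ‖u‖ ^ 2 = d i ^ 2 * ‖v‖ ^ 2 := by
      rw [hucv, norm_smul, mul_pow]
      simp [sq_abs]
    have h2 : d i * (inner ℝ v Y : ℝ) = d i ^ 2 * ‖v‖ ^ 2 := by
      rw [← h1, ← huY, hucv, real_inner_smul_left]
    rcases eq_or_ne (d i) 0 with h0 | h0
    · rw [h1, h0]
      have hnn : (0:ℝ) ≤ (inner ℝ v ε : ℝ) ^ 2 / ‖v‖ ^ 2 :=
        div_nonneg (sq_nonneg _) (sq_nonneg _)
      nlinarith
    · have h3 : (inner ℝ v Y : ℝ) = d i * ‖v‖ ^ 2 := by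
        refine mul_left_cancel₀ h0 ?_
        rw [h2]; ring
      have h4 : (inner ℝ v ε : ℝ) = d i * ‖v‖ ^ 2 := hvY ▸ h3
      rw [h1, h4]
      rw [mul_pow, pow_two (‖v‖ ^ 2), ← mul_assoc, mul_div_assoc,
        div_self hv2pos.ne', mul_one]
  have hdiv : (inner ℝ v ε : ℝ) ^ 2 / ‖v‖ ^ 2 ≤ L * Real.log p := by
    rw [div_le_iff₀ hv2pos]
    calc (inner ℝ v ε : ℝ) ^ 2 ≤ (n:ℝ) * L * ν * Real.log p := hEi
      _ = (L * Real.log p) * ((n:ℝ) * ν) := by ring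
      _ ≤ (L * Real.log p) * ‖v‖ ^ 2 :=
          mul_le_mul_of_nonneg_left hvn (by positivity)
  have hnorm : ‖proj X A' Y‖ ^ 2 ≤ ‖proj X A Y‖ ^ 2 + L * Real.log p := by
    rw [hpyth]
    linarith [le_trans hu2 hdiv]
  -- trace monotonicity
  have htr : LinearMap.trace ℝ (EuclideanSpace ℝ (Fin n)) (proj X A)
      ≤ LinearMap.trace ℝ (EuclideanSpace ℝ (Fin n)) (proj X A') := by
    rw [trace_proj, trace_proj]
    exact_mod_cast Submodule.finrank_mono hle
  -- conclude
  rw [hratio, postWt, postWt, ← Real.exp_sub, Real.log_exp, if_neg hind', if_neg hind]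
  have hcast : (A'.card : ℝ) = (A.card : ℝ) + 1 := by exact_mod_cast hcardA'
  have hc' : D * (A'.card : ℝ) * Real.log p
      = D * (A.card : ℝ) * Real.log p + D * Real.log p := by rw [hcast]; ring
  have hdivβ : ‖proj X A' Y‖ ^ 2 / β ≤ ‖proj X A Y‖ ^ 2 / β + (L * Real.log p) / β := by
    rw [← add_div]
    exact (div_le_div_iff_of_pos_right hβ).mpr hnorm
  have hLβ : (L * Real.log p) / β ≤ D / 2 * Real.log p := by
    rw [div_le_iff₀ hβ]
    have h := mul_le_mul_of_nonneg_right hβD hlogp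
    linarith only [h]
  have htrβ : 2 * LinearMap.trace ℝ (EuclideanSpace ℝ (Fin n)) (proj X A) / β
      ≤ 2 * LinearMap.trace ℝ (EuclideanSpace ℝ (Fin n)) (proj X A') / β :=
    (div_le_div_iff_of_pos_right hβ).mpr (by linarith only [htr])
  linarith only [hdivβ, hLβ, htrβ, hc']

end
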